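/- Let K be an n×n symmetric positive semidefinite matrix and λ > 0. Define the variance V(K) = (σ²/n) · tr(K²(K + nλI)^{-2}). If K₁ ⪯ K₂ (Loewner order), then V(K₁) ≤ V(K₂), i.e., the variance is non-decreasing in K. -/

import Mathlib

open Matrix

noncomputable def spec {m n : ℕ} (A : Matrix (Fin m) (Fin n) ℝ) : ℝ :=
  ‖LinearMap.toContinuousLinearMap (Matrix.toEuclideanLin A)‖

/-- Variance of the fixed-design ridge regression risk, with noise variance s = σ². -/
noncomputable def varFn {n : ℕ} (s lam : ℝ) (K : Matrix (Fin n) (Fin n) ℝ) : ℝ :=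
  (s / n) *
    (K * K * (K + ((n : ℝ) * lam) • (1 : Matrix (Fin n) (Fin n) ℝ))⁻¹ *
      (K + ((n : ℝ) * lam) • (1 : Matrix (Fin n) (Fin n) ℝ))⁻¹).trace

variable {n : ℕ}

lemma aux_trace_nonneg_of_psd {A : Matrix (Fin n) (Fin n) ℝ} (hA : A.PosSemidef) :
    0 ≤ A.trace := by
  rw [Matrix.trace]
  apply Finset.sum_nonneg
  intro i _
  have := hA.dotProduct_mulVec_nonneg (Pi.single i 1)
  simpa [Matrix.mulVec_single, dotProduct, Pi.single_apply] using this

lemma aux_trace_mul_nonneg {A B : Matrix (Fin n) (Fin n) ℝ} (hA : A.PosSemidef)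
    (hB : B.PosSemidef) : 0 ≤ (A * B).trace := by
  open scoped MatrixOrder in
  obtain ⟨C, rfl⟩ := CStarAlgebra.nonneg_iff_eq_star_mul_self.mp hB.nonneg
  rw [← Matrix.mul_assoc, Matrix.trace_mul_cycle]
  exact aux_trace_nonneg_of_psd (hA.mul_mul_conjTranspose_same C)

lemma aux_smul_one_posDef {c : ℝ} (hc : 0 < c) :
    (c • (1 : Matrix (Fin n) (Fin n) ℝ)).PosDef := by
  rw [Matrix.smul_one_eq_diagonal]
  exact Matrix.PosDef.diagonal (fun _ => hc)

lemma aux_inv_antitone {A B : Matrix (Fin n) (Fin n) ℝ} (hA : A.PosDef) (hB : B.PosDef)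
    (h : (B - A).PosSemidef) : (A⁻¹ - B⁻¹).PosSemidef := by
  have hAd : IsUnit A.det := isUnit_iff_ne_zero.mpr hA.det_pos.ne'
  have hBd : IsUnit B.det := isUnit_iff_ne_zero.mpr hB.det_pos.ne'
  refine Matrix.PosSemidef.of_dotProduct_mulVec_nonneg ((hA.inv.isHermitian).sub (hB.inv.isHermitian)) ?_
  intro x
  set y := B⁻¹ *ᵥ x with hy
  set a := A⁻¹ *ᵥ x with ha
  have hBy : B *ᵥ y = x := by
    rw [hy, Matrix.mulVec_mulVec, Matrix.mul_nonsing_inv _ hBd, Matrix.one_mulVec]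
  have hAa : A *ᵥ a = x := by
    rw [ha, Matrix.mulVec_mulVec, Matrix.mul_nonsing_inv _ hAd, Matrix.one_mulVec]
  have hAT : Aᵀ = A := by
    ext i j
    have := congrFun (congrFun hA.isHermitian.eq i) j
    simpa [Matrix.conjTranspose_apply, Matrix.transpose_apply] using this
  have hsymm : ∀ (u v : Fin n → ℝ), u ⬝ᵥ (A *ᵥ v) = (A *ᵥ u) ⬝ᵥ v := by
    intro u v
    rw [Matrix.dotProduct_mulVec, ← Matrix.mulVec_transpose, hAT]
  have q1 : 0 ≤ (y - a) ⬝ᵥ (A *ᵥ (y - a)) := by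
    have := hA.posSemidef.dotProduct_mulVec_nonneg (y - a)
    simpa using this
  have q2 : 0 ≤ y ⬝ᵥ (B *ᵥ y) - y ⬝ᵥ (A *ᵥ y) := by
    have := h.dotProduct_mulVec_nonneg y
    simpa [Matrix.sub_mulVec, dotProduct_sub] using this
  rw [show star x = x from star_trivial x, Matrix.sub_mulVec, dotProduct_sub, ← hy, ← ha]
  have e1 : (y - a) ⬝ᵥ (A *ᵥ (y - a)) =
      y ⬝ᵥ (A *ᵥ y) - x ⬝ᵥ y - x ⬝ᵥ y + x ⬝ᵥ a := by
    rw [Matrix.mulVec_sub, dotProduct_sub, sub_dotProduct, sub_dotProduct, hAa]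
    have h1 : a ⬝ᵥ (A *ᵥ y) = x ⬝ᵥ y := by rw [hsymm, hAa]
    have h2 : y ⬝ᵥ x = x ⬝ᵥ y := dotProduct_comm _ _
    have h3 : a ⬝ᵥ x = x ⬝ᵥ a := dotProduct_comm _ _
    rw [h1, h2, h3]; ring
  have e2 : y ⬝ᵥ (B *ᵥ y) = x ⬝ᵥ y := by rw [hBy, dotProduct_comm]
  rw [e1] at q1
  rw [e2] at q2
  linarith

lemma aux_key_id (c : ℝ) {M : Matrix (Fin n) (Fin n) ℝ} (hM : IsUnit M.det) :
    (M - c • 1) * (M - c • 1) * M⁻¹ * M⁻¹ =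
      1 - (2*c) • M⁻¹ + (c^2) • (M⁻¹ * M⁻¹) := by
  have h1 : M * M⁻¹ = 1 := Matrix.mul_nonsing_inv _ hM
  set R := M⁻¹ with hR
  have k1 : M * M * R * R = 1 := by
    rw [Matrix.mul_assoc M M R, h1, Matrix.mul_one, h1]
  have k2 : M * R * R = R := by rw [h1, Matrix.one_mul]
  have expand : (M - c • 1) * (M - c • 1) * R * R =
      M*M*R*R - c•(M*R*R) - c•(M*R*R) + (c*c)•(R*R) := by
    simp only [Matrix.sub_mul, Matrix.mul_sub, smul_mul_assoc, mul_smul_comm,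
      Matrix.one_mul, Matrix.mul_one, smul_smul, Matrix.mul_assoc]
    module
  rw [expand, k1, k2]
  module

theorem stmt_9 {n : ℕ} (s lam : ℝ) (hs : 0 < s) (hlam : 0 < lam)
    (K₁ K₂ : Matrix (Fin n) (Fin n) ℝ)
    (hK₁ : K₁.PosSemidef) (hK₂ : K₂.PosSemidef)
    (hle : (K₂ - K₁).PosSemidef) :
    varFn s lam K₁ ≤ varFn s lam K₂ := by
  rcases Nat.eq_zero_or_pos n with hn | hn
  · subst hn
    simp [varFn, Matrix.trace]
  set c : ℝ := (n : ℝ) * lam with hc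
  have hcpos : 0 < c := by
    have : (0:ℝ) < (n:ℝ) := by exact_mod_cast hn
    positivity
  set M₁ := K₁ + c • (1 : Matrix (Fin n) (Fin n) ℝ) with hM₁def
  set M₂ := K₂ + c • (1 : Matrix (Fin n) (Fin n) ℝ) with hM₂def
  have hM₁ : M₁.PosDef := Matrix.PosDef.posSemidef_add hK₁ (aux_smul_one_posDef hcpos)
  have hM₂ : M₂.PosDef := Matrix.PosDef.posSemidef_add hK₂ (aux_smul_one_posDef hcpos)
  have hM₁d : IsUnit M₁.det := isUnit_iff_ne_zero.mpr hM₁.det_pos.ne'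
  have hM₂d : IsUnit M₂.det := isUnit_iff_ne_zero.mpr hM₂.det_pos.ne'
  set R₁ := M₁⁻¹ with hR₁
  set R₂ := M₂⁻¹ with hR₂
  -- D := R₁ - R₂ is PSD
  have hsub : M₂ - M₁ = K₂ - K₁ := by rw [hM₁def, hM₂def]; abel
  have hD : (R₁ - R₂).PosSemidef := aux_inv_antitone hM₁ hM₂ (hsub ▸ hle)
  -- bound R₁ + R₂ ⪯ (2/c) • 1
  have hcinv : (c • (1 : Matrix (Fin n) (Fin n) ℝ))⁻¹ = c⁻¹ • 1 := by
    apply Matrix.inv_eq_right_inv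
    rw [smul_mul_smul_comm, Matrix.one_mul, mul_inv_cancel₀ hcpos.ne', one_smul]
  have hb₁ : (c⁻¹ • 1 - R₁).PosSemidef := by
    have h1 : (M₁ - c • (1 : Matrix (Fin n) (Fin n) ℝ)).PosSemidef := by
      have : M₁ - c • (1 : Matrix (Fin n) (Fin n) ℝ) = K₁ := by rw [hM₁def]; abel
      rw [this]; exact hK₁
    have := aux_inv_antitone (aux_smul_one_posDef hcpos) hM₁ h1
    rwa [hcinv] at this
  have hb₂ : (c⁻¹ • 1 - R₂).PosSemidef := by
    have h1 : (M₂ - c • (1 : Matrix (Fin n) (Fin n) ℝ)).PosSemidef := by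
      have : M₂ - c • (1 : Matrix (Fin n) (Fin n) ℝ) = K₂ := by rw [hM₂def]; abel
      rw [this]; exact hK₂
    have := aux_inv_antitone (aux_smul_one_posDef hcpos) hM₂ h1
    rwa [hcinv] at this
  have hP : ((2/c) • (1 : Matrix (Fin n) (Fin n) ℝ) - (R₁ + R₂)).PosSemidef := by
    have := hb₁.add hb₂
    have he : (c⁻¹ • 1 - R₁) + (c⁻¹ • 1 - R₂)
        = (2/c) • (1 : Matrix (Fin n) (Fin n) ℝ) - (R₁ + R₂) := by
      rw [div_eq_mul_inv]
      module
    rwa [he] at this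
  -- key trace inequality
  have htr : 0 ≤ (((2/c) • (1 : Matrix (Fin n) (Fin n) ℝ) - (R₁ + R₂)) * (R₁ - R₂)).trace :=
    aux_trace_mul_nonneg hP hD
  have hexp : (((2/c) • (1 : Matrix (Fin n) (Fin n) ℝ) - (R₁ + R₂)) * (R₁ - R₂)).trace
      = (2/c) * (R₁ - R₂).trace - ((R₁ + R₂) * (R₁ - R₂)).trace := by
    rw [Matrix.sub_mul, Matrix.trace_sub, smul_mul_assoc, Matrix.one_mul, Matrix.trace_smul]
    simp
  have hS : ((R₁ + R₂) * (R₁ - R₂)).trace = (R₁ * R₁).trace - (R₂ * R₂).trace := by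
    rw [Matrix.add_mul, Matrix.mul_sub, Matrix.mul_sub, Matrix.trace_add, Matrix.trace_sub,
      Matrix.trace_sub, Matrix.trace_mul_comm R₂ R₁]
    ring
  have hDt : (R₁ - R₂).trace = R₁.trace - R₂.trace := Matrix.trace_sub _ _
  -- rewrite varFn
  have hvar : ∀ (K : Matrix (Fin n) (Fin n) ℝ), K.PosSemidef →
      varFn s lam K = (s / n) * ((n : ℝ) - (2*c) * (K + c • 1)⁻¹.trace
        + c^2 * ((K + c • 1)⁻¹ * (K + c • 1)⁻¹).trace) := by
    intro K hK
    have hMK : (K + c • (1 : Matrix (Fin n) (Fin n) ℝ)).PosDef :=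
      Matrix.PosDef.posSemidef_add hK (aux_smul_one_posDef hcpos)
    have hMKd : IsUnit (K + c • (1 : Matrix (Fin n) (Fin n) ℝ)).det :=
      isUnit_iff_ne_zero.mpr hMK.det_pos.ne'
    have hKeq : K = (K + c • (1 : Matrix (Fin n) (Fin n) ℝ)) - c • 1 := by abel
    rw [varFn, hc]
    rw [show K * K * (K + ((n : ℝ) * lam) • (1 : Matrix (Fin n) (Fin n) ℝ))⁻¹ *
        (K + ((n : ℝ) * lam) • (1 : Matrix (Fin n) (Fin n) ℝ))⁻¹
      = ((K + c • 1) - c • 1) * ((K + c • 1) - c • 1) * (K + c • 1)⁻¹ * (K + c • 1)⁻¹ by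
        rw [← hKeq, ← hc]]
    rw [aux_key_id c hMKd]
    rw [Matrix.trace_add, Matrix.trace_sub, Matrix.trace_smul, Matrix.trace_smul,
      Matrix.trace_one]
    simp only [smul_eq_mul, Fintype.card_fin]
    try push_cast
    try ring
  rw [hvar K₁ hK₁, hvar K₂ hK₂]
  rw [← hM₁def, ← hM₂def, ← hR₁, ← hR₂]
  have hsn : 0 < s / (n : ℝ) := by
    have : (0:ℝ) < (n:ℝ) := by exact_mod_cast hn
    positivity
  apply mul_le_mul_of_nonneg_left _ hsn.le
  rw [hexp, hS, hDt] at htr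
  have hkey : c^2 * ((R₁*R₁).trace - (R₂*R₂).trace) ≤ 2*c*(R₁.trace - R₂.trace) := by
    have h2 : (R₁*R₁).trace - (R₂*R₂).trace ≤ (2/c) * (R₁.trace - R₂.trace) := by linarith
    have := mul_le_mul_of_nonneg_left h2 (sq_nonneg c)
    calc c^2 * ((R₁*R₁).trace - (R₂*R₂).trace) ≤ c^2 * ((2/c) * (R₁.trace - R₂.trace)) := this
      _ = 2*c*(R₁.trace - R₂.trace) := by field_simp
  linarith
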